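/- Let f : Γ_+ → ℝ be smooth, symmetric, positive, and inverse concave. Then for every κ ∈ Γ_+ and every z = (z_1,…,z_n) ∈ ℝ^n one has ∑_{k,l=1}^n (∂²f/∂κ_k∂κ_l)(κ)·z_k z_l ≥ 2·( f(κ)^{-1}·(∑_{k=1}^n (∂f/∂κ_k)(κ)·z_k)² − ∑_{k=1}^n ((∂f/∂κ_k)(κ)/κ_k)·z_k² ). -/

import Mathlib

open Finset

lemma clm_apply_eq_sum {n : ℕ} (L : (Fin n → ℝ) →L[ℝ] ℝ) (v : Fin n → ℝ) :
    L v = ∑ k : Fin n, v k * L (Pi.single k 1) := by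
  have hv : v = ∑ k : Fin n, v k • (Pi.single k 1 : Fin n → ℝ) := by
    funext j
    simp [Pi.single_apply, Finset.sum_apply]
  conv_lhs => rw [hv]
  rw [map_sum]
  simp [smul_eq_mul]

lemma deriv_nonpos_of_antitoneOn {s : Set ℝ} (hs : IsOpen s) {g : ℝ → ℝ} {x a : ℝ}
    (hg : AntitoneOn g s) (hx : x ∈ s) (h : HasDerivAt g a x) : a ≤ 0 := by
  obtain ⟨ε, hε, hball⟩ := Metric.isOpen_iff.mp hs x hx
  have htend : Filter.Tendsto (slope g x) (nhdsWithin x (Set.Ioi x)) (nhds a) :=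
    (hasDerivAt_iff_tendsto_slope.mp h).mono_left
      (nhdsWithin_mono x fun y hy => ne_of_gt hy)
  refine le_of_tendsto htend ?_
  filter_upwards [Ioo_mem_nhdsGT_of_mem ⟨le_refl x, lt_add_of_pos_right x hε⟩] with y hy
  have hys : y ∈ s := hball (by
    rw [Metric.mem_ball, Real.dist_eq, abs_of_pos (sub_pos.mpr hy.1)]
    linarith [hy.2])
  have hgy : g y ≤ g x := hg hx hys hy.1.le
  rw [slope_def_field]
  exact div_nonpos_of_nonpos_of_nonneg (by linarith) (by linarith [hy.1])

/-- The positive cone `Γ₊ = {κ ∈ ℝⁿ : κᵢ > 0 for all i}`. -/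
def PosCone (n : ℕ) : Set (Fin n → ℝ) := {κ | ∀ i, 0 < κ i}

/-- The first partial derivative `∂f/∂κ_k` at `x`. -/
noncomputable def pd1 {n : ℕ} (f : (Fin n → ℝ) → ℝ) (k : Fin n) (x : Fin n → ℝ) : ℝ :=
  fderiv ℝ f x (Pi.single k 1)

/-- The second partial derivative `∂²f/∂κ_k∂κ_l` at `x`. -/
noncomputable def pd2 {n : ℕ} (f : (Fin n → ℝ) → ℝ) (k l : Fin n) (x : Fin n → ℝ) : ℝ :=
  fderiv ℝ (fun y => fderiv ℝ f y (Pi.single k 1)) x (Pi.single l 1)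

/-- The dual function `f_*(τ) = f(τ₁⁻¹, …, τₙ⁻¹)⁻¹`. -/
noncomputable def dualF {n : ℕ} (f : (Fin n → ℝ) → ℝ) (τ : Fin n → ℝ) : ℝ :=
  (f (fun i => (τ i)⁻¹))⁻¹

/-- If `f` is smooth, symmetric, positive and inverse concave on `Γ₊`, then
`∑_{k,l} (∂²f/∂κ_k∂κ_l) z_k z_l ≥ 2 (f⁻¹ (∑_k (∂f/∂κ_k) z_k)² − ∑_k (∂f/∂κ_k / κ_k) z_k²)`. -/
theorem inverse_concave_hessian_lower_bound (n : ℕ) (f : (Fin n → ℝ) → ℝ)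
    (hsmooth : ContDiffOn ℝ (⊤ : ℕ∞) f (PosCone n))
    (hsym : ∀ σ : Equiv.Perm (Fin n), ∀ κ ∈ PosCone n, f (κ ∘ σ) = f κ)
    (hpos : ∀ κ ∈ PosCone n, 0 < f κ)
    (hinvconc : ConcaveOn ℝ (PosCone n) (dualF f)) :
    ∀ κ ∈ PosCone n, ∀ z : Fin n → ℝ,
      2 * ((f κ)⁻¹ * (∑ k : Fin n, pd1 f k κ * z k) ^ 2
            - ∑ k : Fin n, (pd1 f k κ / κ k) * z k ^ 2)
        ≤ ∑ k : Fin n, ∑ l : Fin n, pd2 f k l κ * z k * z l := by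
  intro κ hκ z
  classical
  have hκi : ∀ i, 0 < κ i := hκ
  -- abbreviations appearing in the goal
  set a : ℝ := f κ with ha_def
  set P : ℝ := ∑ k : Fin n, pd1 f k κ * z k with hP_def
  set R : ℝ := ∑ k : Fin n, (pd1 f k κ / κ k) * z k ^ 2 with hR_def
  set H : ℝ := ∑ k : Fin n, ∑ l : Fin n, pd2 f k l κ * z k * z l with hH_def
  have ha : 0 < a := hpos κ hκ
  -- the curve
  set τ : Fin n → ℝ := fun i => (κ i)⁻¹ with hτ_def
  set w : Fin n → ℝ := fun i => z i * (κ i)⁻¹ ^ 2 with hw_def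
  set u : ℝ → Fin n → ℝ := fun t i => τ i + t * w i with hu_def
  set c : ℝ → Fin n → ℝ := fun t i => (u t i)⁻¹ with hc_def
  set v : ℝ → Fin n → ℝ := fun t i => -(w i) / (u t i) ^ 2 with hv_def
  set I : Set ℝ := {t | ∀ i, 0 < u t i} with hI_def
  have h0I : (0 : ℝ) ∈ I := by
    intro i
    simp only [hu_def, hτ_def, zero_mul, add_zero]
    exact inv_pos.mpr (hκi i)
  have hPopen : IsOpen (PosCone n) := by
    have : PosCone n = ⋂ i, {x : Fin n → ℝ | 0 < x i} := by
      ext x; simp [PosCone, Set.mem_iInter]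
    rw [this]
    exact isOpen_iInter_of_finite fun i => isOpen_lt continuous_const (continuous_apply i)
  have hIopen : IsOpen I := by
    have : I = ⋂ i, {t : ℝ | 0 < u t i} := by
      ext t; simp [hI_def, Set.mem_iInter]
    rw [this]
    refine isOpen_iInter_of_finite fun i => ?_
    exact isOpen_lt continuous_const (by simp only [hu_def]; fun_prop)
  have hcmem : ∀ t ∈ I, c t ∈ PosCone n := by
    intro t ht i
    simp only [hc_def]
    exact inv_pos.mpr (ht i)
  have hc0 : c 0 = κ := by
    funext i
    simp [hc_def, hu_def, hτ_def]
  have hv0 : v 0 = fun i => -(z i) := by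
    funext i
    have hki := (hκi i).ne'
    simp only [hv_def, hu_def, hτ_def, hw_def, zero_mul, add_zero]
    field_simp
  -- differentiability facts for f
  have hfC : ∀ x ∈ PosCone n, ContDiffAt ℝ 2 f x := fun x hx =>
    (hsmooth.contDiffAt (hPopen.mem_nhds hx)).of_le (WithTop.coe_le_coe.mpr le_top)
  have hfdiff : ∀ x ∈ PosCone n, DifferentiableAt ℝ f x := fun x hx =>
    (hfC x hx).differentiableAt (by norm_num)
  have hfd1 : ContDiffAt ℝ 1 (fderiv ℝ f) κ :=
    (hfC κ hκ).fderiv_right (by norm_num)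
  have hpd1diff : ∀ k : Fin n,
      DifferentiableAt ℝ (fun y => fderiv ℝ f y (Pi.single k 1)) κ := fun k =>
    (hfd1.differentiableAt one_ne_zero).clm_apply (differentiableAt_const _)
  -- derivatives of the curve
  have huder : ∀ (t : ℝ) (i : Fin n), HasDerivAt (fun s => u s i) (w i) t := by
    intro t i
    simp only [hu_def]
    simpa using ((hasDerivAt_id t).mul_const (w i)).const_add (τ i)
  have hcd : ∀ t ∈ I, HasDerivAt c (v t) t := by
    intro t ht
    rw [hasDerivAt_pi]
    intro i
    have h2 : u t i ≠ 0 := ne_of_gt (ht i)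
    have h3 := (huder t i).inv h2
    simp only [hc_def, hv_def]
    exact h3
  have hvder : ∀ i : Fin n, HasDerivAt (fun t => v t i) (2 * z i ^ 2 / κ i) 0 := by
    intro i
    have h2 : HasDerivAt (fun t => (u t i) ^ 2) ((2 : ℝ) * u 0 i ^ (2 - 1) * w i) 0 :=
      (huder 0 i).pow 2
    have hne : (u 0 i) ^ 2 ≠ 0 := pow_ne_zero 2 (ne_of_gt (h0I i))
    have h3 := (hasDerivAt_const (0 : ℝ) (-(w i))).div h2 hne
    have he : (0 * u 0 i ^ 2 - -w i * ((2 : ℝ) * u 0 i ^ (2 - 1) * w i)) / (u 0 i ^ 2) ^ 2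
        = 2 * z i ^ 2 / κ i := by
      have hki := (hκi i).ne'
      simp only [hu_def, hτ_def, hw_def, zero_mul, add_zero]
      field_simp
      rw [show (2:ℕ) - 1 = 1 from rfl, pow_one, zero_mul, zero_sub, neg_neg, one_div, mul_comm (κ i),
        mul_assoc (z i ^ 2 * 2), inv_mul_cancel₀ hki, mul_one]
    rw [he] at h3
    simp only [hv_def]
    exact h3
  -- F and its derivative G
  set F : ℝ → ℝ := fun t => f (c t) with hF_def
  set G : ℝ → ℝ := fun t => ∑ k : Fin n, v t k * fderiv ℝ f (c t) (Pi.single k 1) with hG_def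
  have hFpos : ∀ t ∈ I, 0 < F t := fun t ht => hpos _ (hcmem t ht)
  have hFder : ∀ t ∈ I, HasDerivAt F (G t) t := by
    intro t ht
    have hd := (hfdiff (c t) (hcmem t ht)).hasFDerivAt
    have h1 := hd.comp_hasDerivAt t (hcd t ht)
    rw [clm_apply_eq_sum] at h1
    simp only [hF_def, hG_def]
    exact h1
  have hF0 : F 0 = a := by
    simp only [hF_def, hc0, ha_def]
  have hG0 : G 0 = -P := by
    simp only [hG_def, hv0, hc0, hP_def, pd1]
    rw [← Finset.sum_neg_distrib]
    exact Finset.sum_congr rfl fun k _ => by ring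
  -- derivative of G at 0
  have hGder : HasDerivAt G (2 * R + H) 0 := by
    have hsum : HasDerivAt G (∑ k : Fin n,
        (2 * z k ^ 2 / κ k * fderiv ℝ f (c 0) (Pi.single k 1)
          + v 0 k * (fderiv ℝ (fun y => fderiv ℝ f y (Pi.single k 1)) κ) (v 0))) 0 := by
      simp only [hG_def]
      refine HasDerivAt.fun_sum fun k _ => ?_
      have hL : HasFDerivAt (fun y => fderiv ℝ f y (Pi.single k 1))
          (fderiv ℝ (fun y => fderiv ℝ f y (Pi.single k 1)) κ) (c 0) := by
        rw [hc0]; exact (hpd1diff k).hasFDerivAt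
      have hpd := hL.comp_hasDerivAt 0 (hcd 0 h0I)
      exact (hvder k).mul hpd
    have hexp : ∀ k : Fin n,
        (fderiv ℝ (fun y => fderiv ℝ f y (Pi.single k 1)) κ) (fun i => -(z i))
          = ∑ l : Fin n, -(z l) * pd2 f k l κ := fun k => by
      rw [clm_apply_eq_sum]; rfl
    have heq : (∑ k : Fin n,
        (2 * z k ^ 2 / κ k * fderiv ℝ f (c 0) (Pi.single k 1)
          + v 0 k * (fderiv ℝ (fun y => fderiv ℝ f y (Pi.single k 1)) κ) (v 0)))
        = 2 * R + H := by
      simp only [hv0, hexp, hc0, hR_def, hH_def, pd1]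
      rw [Finset.sum_add_distrib]
      congr 1
      · rw [Finset.mul_sum]
        exact Finset.sum_congr rfl fun k _ => by ring
      · refine Finset.sum_congr rfl fun k _ => ?_
        rw [Finset.mul_sum]
        exact Finset.sum_congr rfl fun l _ => by ring
    rw [heq] at hsum
    exact hsum
  -- Φ : derivative of φ = F⁻¹
  set Φ : ℝ → ℝ := fun t => -(G t) / (F t) ^ 2 with hΦ_def
  set φ : ℝ → ℝ := fun t => (F t)⁻¹ with hφ_def
  have hφder : ∀ t ∈ I, HasDerivAt φ (Φ t) t := by
    intro t ht
    have := (hFder t ht).inv (ne_of_gt (hFpos t ht))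
    simp only [hφ_def, hΦ_def]
    exact this
  -- φ is concave on I
  have hucomb : ∀ t1 t2 a' b' : ℝ, a' + b' = 1 →
      u (a' * t1 + b' * t2) = a' • u t1 + b' • u t2 := by
    intro t1 t2 a' b' hab
    funext i
    simp only [hu_def, Pi.add_apply, Pi.smul_apply, smul_eq_mul]
    linear_combination (-(τ i)) * hab
  have hmemI : ∀ t1 ∈ I, ∀ t2 ∈ I, ∀ a' b' : ℝ, 0 ≤ a' → 0 ≤ b' → a' + b' = 1 →
      a' * t1 + b' * t2 ∈ I := by
    intro t1 h1 t2 h2 a' b' ha' hb' hab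
    intro i
    have he : u (a' * t1 + b' * t2) i = a' * u t1 i + b' * u t2 i := by
      rw [hucomb t1 t2 a' b' hab]; simp
    rw [he]
    rcases ha'.lt_or_eq with h | h
    · exact add_pos_of_pos_of_nonneg (mul_pos h (h1 i)) (mul_nonneg hb' (h2 i).le)
    · have hb1 : b' = 1 := by linarith
      rw [← h, hb1]
      simpa using h2 i
  have hφdual : ∀ s : ℝ, φ s = dualF f (u s) := by
    intro s
    simp only [hφ_def, hF_def, hc_def, dualF]
  have hφconc : ConcaveOn ℝ I φ := by
    constructor
    · intro t1 h1 t2 h2 a' b' ha' hb' hab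
      simpa [smul_eq_mul] using hmemI t1 h1 t2 h2 a' b' ha' hb' hab
    · intro t1 h1 t2 h2 a' b' ha' hb' hab
      have hm1 : u t1 ∈ PosCone n := h1
      have hm2 : u t2 ∈ PosCone n := h2
      have := hinvconc.2 hm1 hm2 ha' hb' hab
      calc a' • φ t1 + b' • φ t2 = a' • dualF f (u t1) + b' • dualF f (u t2) := by
            rw [hφdual, hφdual]
      _ ≤ dualF f (a' • u t1 + b' • u t2) := this
      _ = dualF f (u (a' * t1 + b' * t2)) := by rw [hucomb t1 t2 a' b' hab]
      _ = φ (a' • t1 + b' • t2) := by rw [hφdual]; norm_num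
  -- Φ is antitone on I
  have hanti : AntitoneOn Φ I := by
    have h1 : AntitoneOn (deriv φ) I :=
      hφconc.antitoneOn_deriv fun t ht => (hφder t ht).differentiableAt
    intro x hx y hy hxy
    rw [← (hφder x hx).deriv, ← (hφder y hy).deriv]
    exact h1 hx hy hxy
  -- derivative of Φ at 0
  have hF2 : HasDerivAt (fun t => (F t) ^ 2) ((2 : ℝ) * F 0 ^ (2 - 1) * G 0) 0 :=
    (hFder 0 h0I).pow 2
  have hA : HasDerivAt Φ ((2 * a * P ^ 2 - (2 * R + H) * a ^ 2) / a ^ 4) 0 := by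
    have h1 := (hGder.neg).div hF2 (pow_ne_zero 2 (ne_of_gt (hFpos 0 h0I)))
    have he : (-(2 * R + H) * F 0 ^ 2 - -(G 0) * ((2 : ℝ) * F 0 ^ (2 - 1) * G 0))
        / (F 0 ^ 2) ^ 2 = (2 * a * P ^ 2 - (2 * R + H) * a ^ 2) / a ^ 4 := by
      rw [hF0, hG0]
      norm_num
      field_simp
      ring
    rw [Pi.neg_apply, he] at h1
    simp only [hΦ_def]
    exact h1
  have hA0 : (2 * a * P ^ 2 - (2 * R + H) * a ^ 2) / a ^ 4 ≤ 0 :=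
    deriv_nonpos_of_antitoneOn hIopen hanti h0I hA
  -- conclude
  have h4 : (0 : ℝ) < a ^ 4 := by positivity
  have hnum : 2 * a * P ^ 2 - (2 * R + H) * a ^ 2 ≤ 0 := by
    by_contra hcon
    push_neg at hcon
    have := div_pos hcon h4
    linarith
  have hQle : 2 * a * P ^ 2 ≤ (2 * R + H) * a ^ 2 := by linarith
  have ha0 : a ≠ 0 := ha.ne'
  have key : 2 * a⁻¹ * P ^ 2 ≤ 2 * R + H := by
    calc 2 * a⁻¹ * P ^ 2 = 2 * a * P ^ 2 * (a⁻¹) ^ 2 := by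
          field_simp
    _ ≤ (2 * R + H) * a ^ 2 * (a⁻¹) ^ 2 :=
          mul_le_mul_of_nonneg_right hQle (by positivity)
    _ = 2 * R + H := by field_simp
  linarith
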